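/- arXiv:1510.00181 — 7 statements merged into one kernel-verified Lean document; each statement's English description precedes it below -/
import Mathlib

section
/- Let v, u : ℝⁿ → ℝⁿ be C¹ vector fields and suppose there exist scalar functions μ₁, μ₂ : ℝⁿ → ℝ such that the Lie bracket satisfies [v,u](x) = μ₁(x)·v(x) + μ₂(x)·u(x) for all x. Then the skew-symmetric matrix field J(x) with entries J_ij(x) = v_i(x)u_j(x) − v_j(x)u_i(x) satisfies the Jacobi identity: for all indices i, j, k and all x, Σ_l ( J_lk(x)·∂J_ij/∂x_l(x) + J_li(x)·∂J_jk/∂x_l(x) + J_lj(x)·∂J_ki/∂x_l(x) ) = 0. -/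
/-- The wedge of two vector fields: `(v ∧ u)_ij = v_i u_j − v_j u_i`. -/
noncomputable def wedge {n : ℕ} (v u : (Fin n → ℝ) → (Fin n → ℝ)) (x : Fin n → ℝ) :
    Matrix (Fin n) (Fin n) ℝ :=
  Matrix.of fun i j => v x i * u x j - v x j * u x i

/-- The partial derivative `∂F/∂x_l` of a scalar function on ℝⁿ. -/
noncomputable def partialDeriv {n : ℕ} (F : (Fin n → ℝ) → ℝ) (l : Fin n) (x : Fin n → ℝ) : ℝ :=
  fderiv ℝ F x (Pi.single l 1)

/-- A matrix field `J` on ℝⁿ satisfies the Jacobi identity if for all `i, j, k` and all `x`: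
`Σ_l ( J_lk ∂J_ij/∂x_l + J_li ∂J_jk/∂x_l + J_lj ∂J_ki/∂x_l ) = 0`. -/
def JacobiIdentity {n : ℕ} (J : (Fin n → ℝ) → Matrix (Fin n) (Fin n) ℝ) : Prop :=
  ∀ (i j k : Fin n) (x : Fin n → ℝ),
    ∑ l, (J x l k * partialDeriv (fun y => J y i j) l x
        + J x l i * partialDeriv (fun y => J y j k) l x
        + J x l j * partialDeriv (fun y => J y k i) l x) = 0

/-- If `v`, `u` are `C¹` vector fields on ℝⁿ whose Lie bracket satisfies
`[v,u](x) = μ₁(x)·v(x) + μ₂(x)·u(x)` for some scalar functions `μ₁, μ₂`, then the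
skew-symmetric matrix field `J = v ∧ u` satisfies the Jacobi identity. -/
theorem jacobi_of_integrable_distribution {n : ℕ}
    (v u : (Fin n → ℝ) → (Fin n → ℝ))
    (hv : ContDiff ℝ 1 v) (hu : ContDiff ℝ 1 u)
    (μ₁ μ₂ : (Fin n → ℝ) → ℝ)
    (hbr : ∀ x, VectorField.lieBracket ℝ v u x = μ₁ x • v x + μ₂ x • u x) :
    JacobiIdentity (wedge v u) := by
  intro i j k x
  have hvd : DifferentiableAt ℝ v x := (hv.differentiable one_ne_zero) x
  have hud : DifferentiableAt ℝ u x := (hu.differentiable one_ne_zero) x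
  -- component derivatives
  have hVc : ∀ m : Fin n, HasFDerivAt (fun y => v y m)
      ((ContinuousLinearMap.proj m).comp (fderiv ℝ v x)) x := fun m =>
    (ContinuousLinearMap.proj m (R := ℝ) (φ := fun _ : Fin n => ℝ)).hasFDerivAt.comp x
      hvd.hasFDerivAt
  have hUc : ∀ m : Fin n, HasFDerivAt (fun y => u y m)
      ((ContinuousLinearMap.proj m).comp (fderiv ℝ u x)) x := fun m =>
    (ContinuousLinearMap.proj m (R := ℝ) (φ := fun _ : Fin n => ℝ)).hasFDerivAt.comp x
      hud.hasFDerivAt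
  -- derivative of wedge entry
  have hW : ∀ p q : Fin n, HasFDerivAt (fun y => wedge v u y p q)
      ((u x q • ((ContinuousLinearMap.proj p).comp (fderiv ℝ v x))
        + v x p • ((ContinuousLinearMap.proj q).comp (fderiv ℝ u x)))
       - (u x p • ((ContinuousLinearMap.proj q).comp (fderiv ℝ v x))
        + v x q • ((ContinuousLinearMap.proj p).comp (fderiv ℝ u x)))) x := by
    intro p q
    have h1 : HasFDerivAt (fun y => v y p * u y q - v y q * u y p) _ x :=
      ((hVc p).mul (hUc q)).sub ((hVc q).mul (hUc p))
    have h2 : (fun y => wedge v u y p q) = fun y => v y p * u y q - v y q * u y p := by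
      ext y; simp [wedge]
    rw [h2]
    refine h1.congr_fderiv ?_
    ext w
    simp
    ring
  have keyD : ∀ (p q : Fin n) (w : Fin n → ℝ),
      fderiv ℝ (fun y => wedge v u y p q) x w
        = fderiv ℝ v x w p * u x q + v x p * fderiv ℝ u x w q
          - (fderiv ℝ v x w q * u x p + v x q * fderiv ℝ u x w p) := by
    intro p q w
    rw [(hW p q).fderiv]
    simp
    ring
  -- sum of partial derivatives against a vector is the directional derivative
  have sumPD : ∀ (p q : Fin n) (w : Fin n → ℝ),
      ∑ l, w l * partialDeriv (fun y => wedge v u y p q) l x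
        = fderiv ℝ (fun y => wedge v u y p q) x w := by
    intro p q w
    have hw : w = ∑ l, w l • (Pi.single l 1 : Fin n → ℝ) := by
      ext m
      simp [Finset.sum_apply, Pi.single_apply, mul_comm]
    conv_rhs => rw [hw]
    rw [map_sum]
    simp only [map_smul, partialDeriv, smul_eq_mul]
  have hrel : ∀ m, fderiv ℝ u x (v x) m
      = fderiv ℝ v x (u x) m + μ₁ x * v x m + μ₂ x * u x m := by
    intro m
    have h := congrFun (hbr x) m
    simp [VectorField.lieBracket, Pi.sub_apply] at h
    linarith [h]
  -- split the sum
  have expand : ∀ l : Fin n,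
      wedge v u x l k * partialDeriv (fun y => wedge v u y i j) l x
      + wedge v u x l i * partialDeriv (fun y => wedge v u y j k) l x
      + wedge v u x l j * partialDeriv (fun y => wedge v u y k i) l x
      = u x k * (v x l * partialDeriv (fun y => wedge v u y i j) l x)
      - v x k * (u x l * partialDeriv (fun y => wedge v u y i j) l x)
      + (u x i * (v x l * partialDeriv (fun y => wedge v u y j k) l x)
      - v x i * (u x l * partialDeriv (fun y => wedge v u y j k) l x))
      + (u x j * (v x l * partialDeriv (fun y => wedge v u y k i) l x)
      - v x j * (u x l * partialDeriv (fun y => wedge v u y k i) l x)) := by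
    intro l
    simp only [wedge, Matrix.of_apply]
    ring
  rw [Finset.sum_congr rfl (fun l _ => expand l)]
  rw [Finset.sum_add_distrib, Finset.sum_add_distrib, Finset.sum_sub_distrib,
    Finset.sum_sub_distrib, Finset.sum_sub_distrib, ← Finset.mul_sum, ← Finset.mul_sum,
    ← Finset.mul_sum, ← Finset.mul_sum, ← Finset.mul_sum, ← Finset.mul_sum]
  rw [sumPD i j (v x), sumPD i j (u x), sumPD j k (v x), sumPD j k (u x),
    sumPD k i (v x), sumPD k i (u x)]
  rw [keyD i j (v x), keyD i j (u x), keyD j k (v x), keyD j k (u x),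
    keyD k i (v x), keyD k i (u x)]
  simp only [hrel]
  ring
end

section
/- (Hojman's theorem.) Let v, u : ℝⁿ → ℝⁿ be C¹ vector fields and H : ℝⁿ → ℝ a C¹ function such that: (a) v(H) := ⟨v, ∇H⟩ = 0 everywhere (H is a first integral of v); (b) there is a scalar function μ : ℝⁿ → ℝ with [v,u](x) = μ(x)·v(x) for all x; (c) H_u(x) := ⟨u(x), ∇H(x)⟩ ≠ 0 for all x. Then the matrix field J = v∧u, J_ij = v_i u_j − v_j u_i, satisfies the Jacobi identity, and the dynamical system ẋ = v(x) is conformally Hamiltonian: for every x, v(x) = H_u(x)⁻¹ · J(x)·∇H(x), i.e. Σ_j J_ij(x) ∂H/∂x_j(x) = H_u(x)·v_i(x) for all i. -/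
lemma clm_apply_eq_sum {n : ℕ} (φ : (Fin n → ℝ) →L[ℝ] ℝ) (y : Fin n → ℝ) :
    φ y = ∑ l, y l * φ (Pi.single l 1) := by
  have hy : y = ∑ l, y l • (Pi.single l 1 : Fin n → ℝ) := by
    ext m
    simp [Finset.sum_apply, Pi.single_apply]
  conv_lhs => rw [hy]
  simp [smul_eq_mul]

/-- **Hojman's theorem.** If `H` is a first integral of the `C¹` vector field `v`,
`u` is a conformal symmetry field (`[v,u] = μ·v`), and `H_u = u(H) = ⟨u, ∇H⟩` vanishes nowhere,
then `J = v ∧ u` satisfies the Jacobi identity and the system `ẋ = v(x)` is conformally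
Hamiltonian: `Σ_j J_ij ∂H/∂x_j = H_u · v_i` everywhere, i.e. `v = H_u⁻¹ · J·∇H`. -/
theorem hojman_theorem {n : ℕ}
    (v u : (Fin n → ℝ) → (Fin n → ℝ)) (H : (Fin n → ℝ) → ℝ)
    (hv : ContDiff ℝ 1 v) (hu : ContDiff ℝ 1 u) (hH : ContDiff ℝ 1 H)
    (hfirst : ∀ x, fderiv ℝ H x (v x) = 0)
    (μ : (Fin n → ℝ) → ℝ)
    (hbr : ∀ x, VectorField.lieBracket ℝ v u x = μ x • v x)
    (hHu : ∀ x, fderiv ℝ H x (u x) ≠ 0) :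
    JacobiIdentity (wedge v u) ∧
      ∀ (x : Fin n → ℝ) (i : Fin n),
        ∑ j, wedge v u x i j * partialDeriv H j x = fderiv ℝ H x (u x) * v x i := by
  constructor
  · intro i j k x
    -- component derivatives
    have hv' : ∀ m : Fin n, HasFDerivAt (fun y => v y m)
        ((ContinuousLinearMap.proj m).comp (fderiv ℝ v x)) x :=
      hasFDerivAt_pi'.mp (hv.differentiable one_ne_zero x).hasFDerivAt
    have hu' : ∀ m : Fin n, HasFDerivAt (fun y => u y m)
        ((ContinuousLinearMap.proj m).comp (fderiv ℝ u x)) x :=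
      hasFDerivAt_pi'.mp (hu.differentiable one_ne_zero x).hasFDerivAt
    set A : Fin n → Fin n → ℝ := fun l m => fderiv ℝ v x (Pi.single l 1) m with hA
    set B : Fin n → Fin n → ℝ := fun l m => fderiv ℝ u x (Pi.single l 1) m with hB
    -- partial derivatives of the wedge
    have hJ : ∀ (a b l : Fin n),
        partialDeriv (fun y => wedge v u y a b) l x
          = (A l a * u x b + v x a * B l b) - (A l b * u x a + v x b * B l a) := by
      intro a b l
      have hd : HasFDerivAt (fun y => v y a * u y b - v y b * u y a)
          ((v x a • ((ContinuousLinearMap.proj b).comp (fderiv ℝ u x))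
            + u x b • ((ContinuousLinearMap.proj a).comp (fderiv ℝ v x)))
           - (v x b • ((ContinuousLinearMap.proj a).comp (fderiv ℝ u x))
            + u x a • ((ContinuousLinearMap.proj b).comp (fderiv ℝ v x)))) x :=
        ((hv' a).mul (hu' b)).sub ((hv' b).mul (hu' a))
      have : partialDeriv (fun y => wedge v u y a b) l x
          = partialDeriv (fun y => v y a * u y b - v y b * u y a) l x := by
        simp [wedge, partialDeriv, Matrix.of_apply]
      rw [this, partialDeriv, hd.fderiv]
      simp [hA, hB]
      ring
    -- bracket components
    have hW : ∀ m : Fin n, ∑ l, (v x l * B l m - u x l * A l m) = μ x * v x m := by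
      intro m
      have h1 : (fderiv ℝ u x (v x)) m
          = ∑ l, v x l * B l m := by
        have := clm_apply_eq_sum ((ContinuousLinearMap.proj m).comp (fderiv ℝ u x)) (v x)
        simpa [hB] using this
      have h2 : (fderiv ℝ v x (u x)) m
          = ∑ l, u x l * A l m := by
        have := clm_apply_eq_sum ((ContinuousLinearMap.proj m).comp (fderiv ℝ v x)) (u x)
        simpa [hA] using this
      have hb := congrFun (hbr x) m
      simp only [VectorField.lieBracket, Pi.sub_apply, Pi.smul_apply, smul_eq_mul] at hb
      rw [Finset.sum_sub_distrib, ← h1, ← h2]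
      exact hb
    -- per-l identity and conclusion
    have key : ∀ l : Fin n,
        wedge v u x l k * partialDeriv (fun y => wedge v u y i j) l x
        + wedge v u x l i * partialDeriv (fun y => wedge v u y j k) l x
        + wedge v u x l j * partialDeriv (fun y => wedge v u y k i) l x
        = (v x k * u x j - v x j * u x k) * (v x l * B l i - u x l * A l i)
        + (v x i * u x k - v x k * u x i) * (v x l * B l j - u x l * A l j)
        + (v x j * u x i - v x i * u x j) * (v x l * B l k - u x l * A l k) := by
      intro l
      rw [hJ, hJ, hJ]
      simp only [wedge, Matrix.of_apply]
      ring
    rw [Finset.sum_congr rfl fun l _ => key l]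
    rw [Finset.sum_add_distrib, Finset.sum_add_distrib, ← Finset.mul_sum, ← Finset.mul_sum,
      ← Finset.mul_sum, hW, hW, hW]
    ring
  · intro x i
    have h1 : fderiv ℝ H x (u x) = ∑ j, u x j * partialDeriv H j x :=
      clm_apply_eq_sum (fderiv ℝ H x) (u x)
    have h2 : (0 : ℝ) = ∑ j, v x j * partialDeriv H j x := by
      rw [← hfirst x]; exact clm_apply_eq_sum (fderiv ℝ H x) (v x)
    have : ∑ j, wedge v u x i j * partialDeriv H j x
        = v x i * (∑ j, u x j * partialDeriv H j x)
          - u x i * (∑ j, v x j * partialDeriv H j x) := by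
      rw [Finset.mul_sum, Finset.mul_sum, ← Finset.sum_sub_distrib]
      refine Finset.sum_congr rfl fun j _ => ?_
      simp only [wedge, Matrix.of_apply]
      ring
    rw [this, ← h1, ← h2, h1]
    ring
end

section
/- Let v, u : ℝⁿ → ℝⁿ be C¹ vector fields and H : ℝⁿ → ℝ a C² function such that ⟨v, ∇H⟩ = 0 everywhere and [v,u](x) = μ(x)·v(x) for some scalar function μ. Then the reducing multiplier H_u(x) = ⟨u(x), ∇H(x)⟩ is itself a first integral of v: ⟨v(x), ∇H_u(x)⟩ = 0 for all x. -/
/-- Under the hypotheses of Hojman's theorem (with `H` of class `C²`),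
the reducing multiplier `H_u(x) = ⟨u(x), ∇H(x)⟩` is itself a first integral of `v`:
`⟨v(x), ∇H_u(x)⟩ = 0` for all `x`. -/
theorem reducing_multiplier_is_first_integral {n : ℕ}
    (v u : (Fin n → ℝ) → (Fin n → ℝ)) (H : (Fin n → ℝ) → ℝ)
    (hv : ContDiff ℝ 1 v) (hu : ContDiff ℝ 1 u) (hH : ContDiff ℝ 2 H)
    (hfirst : ∀ x, fderiv ℝ H x (v x) = 0)
    (μ : (Fin n → ℝ) → ℝ)
    (hbr : ∀ x, VectorField.lieBracket ℝ v u x = μ x • v x) :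
    ∀ x, fderiv ℝ (fun y => fderiv ℝ H y (u y)) x (v x) = 0 := by
  intro x
  have hvd : DifferentiableAt ℝ v x := hv.differentiable one_ne_zero x
  have hud : DifferentiableAt ℝ u x := hu.differentiable one_ne_zero x
  have hH1 : ContDiff ℝ 1 (fderiv ℝ H) := hH.fderiv_right (m := 1) (by norm_num)
  have hHd : DifferentiableAt ℝ (fderiv ℝ H) x := hH1.differentiable one_ne_zero x
  have h1 : fderiv ℝ (fun y => fderiv ℝ H y (u y)) x =
      (fderiv ℝ H x).comp (fderiv ℝ u x) + (fderiv ℝ (fderiv ℝ H) x).flip (u x) :=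
    fderiv_clm_apply hHd hud
  have h2 : fderiv ℝ (fun y => fderiv ℝ H y (v y)) x =
      (fderiv ℝ H x).comp (fderiv ℝ v x) + (fderiv ℝ (fderiv ℝ H) x).flip (v x) :=
    fderiv_clm_apply hHd hvd
  have h0 : (fun y => fderiv ℝ H y (v y)) = fun _ => (0 : ℝ) := funext hfirst
  have h3 : (fderiv ℝ H x).comp (fderiv ℝ v x) + (fderiv ℝ (fderiv ℝ H) x).flip (v x) = 0 := by
    rw [← h2, h0]; simp
  have hzero : fderiv ℝ H x (fderiv ℝ v x (u x))
      + fderiv ℝ (fderiv ℝ H) x (u x) (v x) = 0 := by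
    have := congrArg (fun L => L (u x)) h3
    simpa using this
  have hsymm : IsSymmSndFDerivAt ℝ H x := hH.contDiffAt.isSymmSndFDerivAt (by simp)
  have hsym : fderiv ℝ (fderiv ℝ H) x (v x) (u x)
      = fderiv ℝ (fderiv ℝ H) x (u x) (v x) := hsymm (v x) (u x)
  have hbr' : fderiv ℝ u x (v x) = fderiv ℝ v x (u x) + μ x • v x := by
    have := hbr x
    rw [VectorField.lieBracket] at this
    linear_combination (norm := module) this
  rw [h1]
  simp only [ContinuousLinearMap.add_apply, ContinuousLinearMap.flip_apply,
    ContinuousLinearMap.coe_comp', Function.comp_apply]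
  rw [hbr', hsym, map_add, map_smul, hfirst x]
  simp only [smul_eq_mul, mul_zero, add_zero]
  linarith [hzero]
end

section
/- (Hamiltonization in an extended phase space.) Let v : ℝⁿ → ℝⁿ be a C¹ vector field and E : ℝⁿ → ℝ a C¹ function with ⟨v, ∇E⟩ = 0 everywhere. On ℝⁿ × ℝ with added coordinate y, define the vector field ṽ(x,y) = (v(x), 0), the vector field e = (0,…,0,1) (the coordinate field ∂/∂y), and the matrix field J = ṽ∧e. Then: (i) J satisfies the Jacobi identity; (ii) the Hamiltonian vector field of the coordinate function y with respect to J is ṽ, i.e. J(x,y)·∇y = ṽ(x,y) for all (x,y); (iii) E (regarded as a function on ℝⁿ × ℝ independent of y) is a Casimir function of J, i.e. J(x,y)·∇E = 0 for all (x,y). -/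
/-- The gradient of a scalar function on ℝⁿ, as the vector of partial derivatives. -/
noncomputable def grad {n : ℕ} (F : (Fin n → ℝ) → ℝ) (x : Fin n → ℝ) : Fin n → ℝ :=
  fun j => fderiv ℝ F x (Pi.single j 1)

/-- The extension `ṽ(x,y) = (v(x), 0)` of a vector field on ℝⁿ to ℝⁿ × ℝ = ℝⁿ⁺¹,
where `y` is the added last coordinate. -/
noncomputable def extendField {n : ℕ} (v : (Fin n → ℝ) → (Fin n → ℝ)) :
    (Fin (n + 1) → ℝ) → (Fin (n + 1) → ℝ) :=
  fun p => Fin.snoc (v fun i => p i.castSucc) 0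

/-- **Hamiltonization in an extended phase space.** Let `v` be a `C¹` vector field
on ℝⁿ and `E` a `C¹` first integral of `v`. On ℝⁿ × ℝ (coordinate `y` added last), with
`ṽ(x,y) = (v(x),0)`, `e = ∂/∂y` and `J = ṽ ∧ e`: (i) `J` satisfies the Jacobi identity;
(ii) the Hamiltonian vector field of the coordinate function `y` with respect to `J` is `ṽ`;
(iii) `E`, regarded as a function on ℝⁿ × ℝ independent of `y`, is a Casimir of `J`. -/
theorem extended_phase_space_hamiltonization {n : ℕ}
    (v : (Fin n → ℝ) → (Fin n → ℝ)) (E : (Fin n → ℝ) → ℝ)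
    (hv : ContDiff ℝ 1 v) (hE : ContDiff ℝ 1 E)
    (hint : ∀ x, fderiv ℝ E x (v x) = 0) :
    JacobiIdentity (wedge (extendField v) (fun _ => Pi.single (Fin.last n) 1)) ∧
    (∀ p : Fin (n + 1) → ℝ,
      (wedge (extendField v) (fun _ => Pi.single (Fin.last n) 1) p).mulVec
        (grad (fun q => q (Fin.last n)) p) = extendField v p) ∧
    (∀ p : Fin (n + 1) → ℝ,
      (wedge (extendField v) (fun _ => Pi.single (Fin.last n) 1) p).mulVec
        (grad (fun q => E fun i => q i.castSucc) p) = 0) := by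
  have hvd : Differentiable ℝ v := hv.differentiable one_ne_zero
  have hEd : Differentiable ℝ E := hE.differentiable one_ne_zero
  set w := extendField v with hw
  set e : Fin (n + 1) → ℝ := Pi.single (Fin.last n) 1 with he
  -- the restriction continuous linear map
  set L : ((Fin (n + 1) → ℝ) →L[ℝ] (Fin n → ℝ)) :=
    ContinuousLinearMap.pi (fun i => ContinuousLinearMap.proj i.castSucc) with hL
  have hLapp : ∀ p : Fin (n + 1) → ℝ, L p = fun i => p i.castSucc := fun p => rfl
  have hwlast : ∀ p, w p (Fin.last n) = 0 := by
    intro p; simp [hw, extendField, Fin.snoc_last]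
  have hwcast : ∀ p (i : Fin n), w p i.castSucc = v (L p) i := by
    intro p i; simp [hw, extendField, Fin.snoc_castSucc, hLapp]
  have hLsingle_last : L (Pi.single (Fin.last n) (1:ℝ)) = 0 := by
    funext i
    simp [hLapp, Pi.single_eq_of_ne (Fin.castSucc_lt_last i).ne]
  have hLsingle_cast : ∀ i : Fin n, L (Pi.single i.castSucc (1:ℝ)) = Pi.single i 1 := by
    intro i; funext j
    by_cases h : j = i
    · subst h; simp [hLapp]
    · simp [hLapp, Pi.single_eq_of_ne h,
        Pi.single_eq_of_ne (fun hc => h (Fin.castSucc_injective n hc))]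
  -- component differentiability of w
  have hwdiff : ∀ m, Differentiable ℝ (fun p => w p m) := by
    intro m
    refine Fin.lastCases ?_ ?_ m
    · simp only [funext hwlast]; exact differentiable_const (0:ℝ)
    · intro i
      have : Differentiable ℝ (fun p => v (L p)) := hvd.comp L.differentiable
      have h2 := differentiable_pi.mp this i
      simpa [hwcast] using h2
  -- directional derivative of a component in direction l
  set D : Fin (n + 1) → Fin (n + 1) → (Fin (n + 1) → ℝ) → ℝ :=
    fun l m p => fderiv ℝ (fun q => w q m) p (Pi.single l 1) with hD
  have hDlast : ∀ m p, D (Fin.last n) m p = 0 := by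
    intro m p
    refine Fin.lastCases ?_ ?_ m
    · simp [hD, funext hwlast]
    · intro i
      have hcomp : (fun q => w q i.castSucc) = (fun x => v x i) ∘ (L : (Fin (n+1) → ℝ) → _) := by
        funext q; simp [hwcast]
      have hdg : DifferentiableAt ℝ (fun x => v x i) (L p) :=
        differentiable_pi.mp hvd i (L p)
      have : fderiv ℝ (fun q => w q i.castSucc) p =
          (fderiv ℝ (fun x => v x i) (L p)).comp (L : (Fin (n+1) → ℝ) →L[ℝ] _) := by
        rw [hcomp]
        exact (hdg.hasFDerivAt.comp p L.hasFDerivAt).fderiv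
      simp [hD, this, hLsingle_last]
  -- partial derivatives of J components
  have hpd : ∀ (i j : Fin (n+1)) (l : Fin (n+1)) (p : Fin (n+1) → ℝ),
      partialDeriv (fun y => wedge w (fun _ => e) y i j) l p
        = e j * D l i p - e i * D l j p := by
    intro i j l p
    have h1 : (fun y => wedge w (fun _ => e) y i j)
        = fun y => w y i * e j - w y j * e i := by
      funext y; simp [wedge]
    have h2 : fderiv ℝ (fun y => w y i * e j - w y j * e i) p
        = e j • fderiv ℝ (fun y => w y i) p - e i • fderiv ℝ (fun y => w y j) p := by
      rw [fderiv_fun_sub ((hwdiff i p).mul_const _) ((hwdiff j p).mul_const _),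
        fderiv_mul_const (hwdiff i p), fderiv_mul_const (hwdiff j p)]
    simp only [partialDeriv, h1, h2]
    simp [hD, mul_comm]
  have hel : ∀ l, l ≠ Fin.last n → e l = 0 := by
    intro l hl; simp [he, Pi.single_eq_of_ne hl]
  have helast : e (Fin.last n) = 1 := by simp [he]
  refine ⟨?_, ?_, ?_⟩
  · -- Jacobi identity
    intro i j k p
    apply Finset.sum_eq_zero
    intro l _
    rw [hpd, hpd, hpd]
    have hJ : ∀ a b : Fin (n+1), wedge w (fun _ => e) p a b = w p a * e b - w p b * e a := by
      intro a b; simp [wedge]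
    rw [hJ, hJ, hJ]
    rcases eq_or_ne l (Fin.last n) with rfl | hl
    · simp only [hDlast]; ring
    · rw [hel l hl]; ring
  · -- Hamiltonian vector field of y is ṽ
    intro p
    funext i
    have hgrad : grad (fun q => q (Fin.last n)) p = e := by
      funext j
      have : fderiv ℝ (fun q : Fin (n+1) → ℝ => q (Fin.last n)) p =
          ContinuousLinearMap.proj (Fin.last n) :=
        (ContinuousLinearMap.proj (R := ℝ) (φ := fun _ : Fin (n+1) => ℝ)
          (Fin.last n)).fderiv
      simp only [grad, this, ContinuousLinearMap.proj_apply]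
      by_cases h : j = Fin.last n
      · subst h; simp [he]
      · simp [he, Pi.single_eq_of_ne h, Pi.single_eq_of_ne (Ne.symm h)]
    rw [hgrad]
    show ∑ x, wedge w (fun _ => e) p i x * e x = w p i
    have hJ : ∀ a b : Fin (n+1), wedge w (fun _ => e) p a b = w p a * e b - w p b * e a := by
      intro a b; simp [wedge]
    rw [Fin.sum_univ_castSucc]
    have hzero : ∀ x : Fin n, wedge w (fun _ => e) p i x.castSucc * e x.castSucc = 0 := by
      intro x
      rw [hel _ (Fin.castSucc_lt_last x).ne, mul_zero]
    rw [Finset.sum_eq_zero (fun x _ => hzero x), hJ, helast, hwlast]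
    ring
  · -- E is a Casimir
    intro p
    funext i
    have hcomp : (fun q : Fin (n+1) → ℝ => E fun i => q i.castSucc)
        = E ∘ (L : (Fin (n+1) → ℝ) → _) := by
      funext q; simp [hLapp]
    have hfd : fderiv ℝ (fun q : Fin (n+1) → ℝ => E fun i => q i.castSucc) p
        = (fderiv ℝ E (L p)).comp (L : (Fin (n+1) → ℝ) →L[ℝ] _) := by
      rw [hcomp]
      exact ((hEd (L p)).hasFDerivAt.comp p L.hasFDerivAt).fderiv
    have hglast : grad (fun q : Fin (n+1) → ℝ => E fun i => q i.castSucc) p (Fin.last n) = 0 := by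
      simp [grad, hfd, hLsingle_last]
    have hgcast : ∀ j : Fin n,
        grad (fun q : Fin (n+1) → ℝ => E fun i => q i.castSucc) p j.castSucc
          = fderiv ℝ E (L p) (Pi.single j 1) := by
      intro j; simp [grad, hfd, hLsingle_cast j]
    set g := grad (fun q : Fin (n+1) → ℝ => E fun i => q i.castSucc) p with hg
    have hJ : ∀ a b : Fin (n+1), wedge w (fun _ => e) p a b = w p a * e b - w p b * e a := by
      intro a b; simp [wedge]
    show ∑ x, wedge w (fun _ => e) p i x * g x = 0
    have key : ∑ x, w p x * g x = 0 := by
      rw [Fin.sum_univ_castSucc, hwlast, hglast]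
      have : ∀ x : Fin n, w p x.castSucc * g x.castSucc
          = fderiv ℝ E (L p) (Pi.single x (v (L p) x)) := by
        intro x
        rw [hwcast, hgcast]
        have : Pi.single x (v (L p) x) = (v (L p) x) • (Pi.single x (1:ℝ) : Fin n → ℝ) := by
          funext y
          by_cases h : y = x
          · subst h; simp
          · simp [Pi.single_eq_of_ne h]
        rw [this, map_smul]
        simp
      rw [Finset.sum_congr rfl (fun x _ => this x), ← map_sum]
      simp only [Finset.univ_sum_single]
      simp [hint]
    calc ∑ x, wedge w (fun _ => e) p i x * g x
        = ∑ x, (w p i * (e x * g x) - e i * (w p x * g x)) := by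
          apply Finset.sum_congr rfl; intro x _; rw [hJ]; ring
      _ = w p i * ∑ x, e x * g x - e i * ∑ x, w p x * g x := by
          rw [Finset.sum_sub_distrib, ← Finset.mul_sum, ← Finset.mul_sum]
      _ = 0 := by
          have : ∑ x, e x * g x = g (Fin.last n) := by
            rw [Fin.sum_univ_castSucc, helast]
            rw [Finset.sum_eq_zero (fun x _ => by rw [hel _ (Fin.castSucc_lt_last x).ne, zero_mul])]
            ring
          rw [this, hglast, key]; ring
end

section
/- For the nonholonomic hinge system v on ℝ⁵, define the skew-symmetric matrix field J whose only nonzero entries above the diagonal are J₁₅ = Ω₂−ω₂, J₂₅ = −(Ω₁−ω₁), J₃₅ = (I₂−I₃)ω₂/I₁, J₄₅ = −(I₁−I₃)ω₁/I₂ (with J₅ᵢ = −Jᵢ₅), rows/columns ordered as (Ω₁,Ω₂,ω₁,ω₂,ω₃). Then J satisfies the Jacobi identity on all of ℝ⁵, and the hinge system is Hamiltonian with Hamiltonian E up to the constant factor I₃+I_s: J(x)·∇E(x) = (I₃+I_s)·v(x) for every x ∈ ℝ⁵. -/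
/-- The nonholonomic hinge system on ℝ⁵, coordinates `x = (Ω₁, Ω₂, ω₁, ω₂, ω₃)`,
with parameters `I₁, I₂, I₃` (tensor of inertia of the inner body) and `Is` (shell):
`Ω̇₁ = ω₃(Ω₂−ω₂)`, `Ω̇₂ = ω₃(ω₁−Ω₁)`, `I₁ω̇₁ = (I₂−I₃)ω₂ω₃`, `I₂ω̇₂ = (I₃−I₁)ω₁ω₃`,
`(Is+I₃)ω̇₃ = Is(Ω₁ω₂−Ω₂ω₁) + (I₁−I₂)ω₁ω₂`. -/
noncomputable def hinge (I₁ I₂ I₃ Is : ℝ) (x : Fin 5 → ℝ) : Fin 5 → ℝ :=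
  ![x 4 * (x 1 - x 3),
    x 4 * (x 2 - x 0),
    (I₂ - I₃) * (x 3 * x 4) / I₁,
    (I₃ - I₁) * (x 2 * x 4) / I₂,
    (Is * (x 0 * x 3 - x 1 * x 2) + (I₁ - I₂) * (x 2 * x 3)) / (Is + I₃)]

/-- The energy of the nonholonomic hinge:
`E = ½ Is (Ω₁² + Ω₂²) + ½ (I₁ω₁² + I₂ω₂² + (I₃+Is)ω₃²)`. -/
noncomputable def hingeE (I₁ I₂ I₃ Is : ℝ) (x : Fin 5 → ℝ) : ℝ :=
  (1 / 2) * Is * ((x 0) ^ 2 + (x 1) ^ 2)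
    + (1 / 2) * (I₁ * (x 2) ^ 2 + I₂ * (x 3) ^ 2 + (I₃ + Is) * (x 4) ^ 2)
/-- The Poisson structure `J⁽²⁾` for the nonholonomic hinge, rows/columns ordered as
`(Ω₁, Ω₂, ω₁, ω₂, ω₃)`: the only nonzero entries above the diagonal are
`J₁₅ = Ω₂−ω₂`, `J₂₅ = −(Ω₁−ω₁)`, `J₃₅ = (I₂−I₃)ω₂/I₁`, `J₄₅ = −(I₁−I₃)ω₁/I₂`. -/
noncomputable def hingeJ (I₁ I₂ I₃ : ℝ) (x : Fin 5 → ℝ) : Matrix (Fin 5) (Fin 5) ℝ :=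
  Matrix.of
    ![![0, 0, 0, 0, x 1 - x 3],
      ![0, 0, 0, 0, -(x 0 - x 2)],
      ![0, 0, 0, 0, (I₂ - I₃) * x 3 / I₁],
      ![0, 0, 0, 0, -((I₁ - I₃) * x 2 / I₂)],
      ![-(x 1 - x 3), x 0 - x 2, -((I₂ - I₃) * x 3 / I₁), (I₁ - I₃) * x 2 / I₂, 0]]

section hingeAux

lemma hinge_pd_lin (a b : ℝ) (p q l : Fin 5) (x : Fin 5 → ℝ) :
    partialDeriv (fun y => a * y p + b * y q) l x
      = a * (Pi.single l 1 : Fin 5 → ℝ) p + b * (Pi.single l 1 : Fin 5 → ℝ) q := by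
  have h := ((ContinuousLinearMap.proj (R := ℝ) (φ := fun _ : Fin 5 => ℝ) p).hasFDerivAt
      (x := x)).const_mul a |>.add
    (((ContinuousLinearMap.proj (R := ℝ) (φ := fun _ : Fin 5 => ℝ) q).hasFDerivAt
      (x := x)).const_mul b)
  simp only [ContinuousLinearMap.proj_apply, Pi.add_def] at h
  rw [partialDeriv, h.fderiv]
  simp

lemma hinge_pd_const (c : ℝ) (l : Fin 5) (x : Fin 5 → ℝ) :
    partialDeriv (fun _ => c) l x = 0 := by
  simp [partialDeriv]

lemma hinge_pdA (l : Fin 5) (x : Fin 5 → ℝ) :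
    partialDeriv (fun y : Fin 5 → ℝ => y 1 - y 3) l x
      = (Pi.single l 1 : Fin 5 → ℝ) 1 - (Pi.single l 1 : Fin 5 → ℝ) 3 := by
  rw [show (fun y : Fin 5 → ℝ => y 1 - y 3) = fun y => 1 * y 1 + (-1) * y 3 by funext y; ring,
    hinge_pd_lin]; ring

lemma hinge_pdA' (l : Fin 5) (x : Fin 5 → ℝ) :
    partialDeriv (fun y : Fin 5 → ℝ => -(y 1 - y 3)) l x
      = -((Pi.single l 1 : Fin 5 → ℝ) 1 - (Pi.single l 1 : Fin 5 → ℝ) 3) := by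
  rw [show (fun y : Fin 5 → ℝ => -(y 1 - y 3)) = fun y => (-1) * y 1 + 1 * y 3 by funext y; ring,
    hinge_pd_lin]; ring

lemma hinge_pdB (l : Fin 5) (x : Fin 5 → ℝ) :
    partialDeriv (fun y : Fin 5 → ℝ => -(y 0 - y 2)) l x
      = -((Pi.single l 1 : Fin 5 → ℝ) 0 - (Pi.single l 1 : Fin 5 → ℝ) 2) := by
  rw [show (fun y : Fin 5 → ℝ => -(y 0 - y 2)) = fun y => (-1) * y 0 + 1 * y 2 by funext y; ring,
    hinge_pd_lin]; ring

lemma hinge_pdB' (l : Fin 5) (x : Fin 5 → ℝ) :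
    partialDeriv (fun y : Fin 5 → ℝ => y 0 - y 2) l x
      = (Pi.single l 1 : Fin 5 → ℝ) 0 - (Pi.single l 1 : Fin 5 → ℝ) 2 := by
  rw [show (fun y : Fin 5 → ℝ => y 0 - y 2) = fun y => 1 * y 0 + (-1) * y 2 by funext y; ring,
    hinge_pd_lin]; ring

lemma hinge_pdC (c d : ℝ) (l : Fin 5) (x : Fin 5 → ℝ) :
    partialDeriv (fun y : Fin 5 → ℝ => c * y 3 / d) l x
      = c * (Pi.single l 1 : Fin 5 → ℝ) 3 / d := by
  rw [show (fun y : Fin 5 → ℝ => c * y 3 / d) = fun y => (c / d) * y 3 + 0 * y 0 by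
      funext y; ring, hinge_pd_lin]; ring

lemma hinge_pdC' (c d : ℝ) (l : Fin 5) (x : Fin 5 → ℝ) :
    partialDeriv (fun y : Fin 5 → ℝ => -(c * y 3 / d)) l x
      = -(c * (Pi.single l 1 : Fin 5 → ℝ) 3 / d) := by
  rw [show (fun y : Fin 5 → ℝ => -(c * y 3 / d)) = fun y => (-(c / d)) * y 3 + 0 * y 0 by
      funext y; ring, hinge_pd_lin]; ring

lemma hinge_pdD (c d : ℝ) (l : Fin 5) (x : Fin 5 → ℝ) :
    partialDeriv (fun y : Fin 5 → ℝ => -(c * y 2 / d)) l x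
      = -(c * (Pi.single l 1 : Fin 5 → ℝ) 2 / d) := by
  rw [show (fun y : Fin 5 → ℝ => -(c * y 2 / d)) = fun y => (-(c / d)) * y 2 + 0 * y 0 by
      funext y; ring, hinge_pd_lin]; ring

lemma hinge_pdD' (c d : ℝ) (l : Fin 5) (x : Fin 5 → ℝ) :
    partialDeriv (fun y : Fin 5 → ℝ => c * y 2 / d) l x
      = c * (Pi.single l 1 : Fin 5 → ℝ) 2 / d := by
  rw [show (fun y : Fin 5 → ℝ => c * y 2 / d) = fun y => (c / d) * y 2 + 0 * y 0 by
      funext y; ring, hinge_pd_lin]; ring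

lemma hinge_pdE (l : Fin 5) (x : Fin 5 → ℝ) :
    partialDeriv (fun y : Fin 5 → ℝ => y 3 - y 1) l x
      = (Pi.single l 1 : Fin 5 → ℝ) 3 - (Pi.single l 1 : Fin 5 → ℝ) 1 := by
  rw [show (fun y : Fin 5 → ℝ => y 3 - y 1) = fun y => 1 * y 3 + (-1) * y 1 by funext y; ring,
    hinge_pd_lin]; ring

lemma hinge_pdF (l : Fin 5) (x : Fin 5 → ℝ) :
    partialDeriv (fun y : Fin 5 → ℝ => y 2 - y 0) l x
      = (Pi.single l 1 : Fin 5 → ℝ) 2 - (Pi.single l 1 : Fin 5 → ℝ) 0 := by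
  rw [show (fun y : Fin 5 → ℝ => y 2 - y 0) = fun y => 1 * y 2 + (-1) * y 0 by funext y; ring,
    hinge_pd_lin]; ring

lemma hinge_grad (I₁ I₂ I₃ Is : ℝ) (x : Fin 5 → ℝ) :
    grad (hingeE I₁ I₂ I₃ Is) x
      = ![Is * x 0, Is * x 1, I₁ * x 2, I₂ * x 3, (I₃ + Is) * x 4] := by
  have hp : ∀ p : Fin 5, HasFDerivAt (fun y : Fin 5 → ℝ => y p)
      (ContinuousLinearMap.proj (R := ℝ) (φ := fun _ : Fin 5 => ℝ) p) x := fun p => by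
    exact (ContinuousLinearMap.proj (R := ℝ) (φ := fun _ : Fin 5 => ℝ) p).hasFDerivAt
  have hsq : ∀ p : Fin 5, HasFDerivAt (fun y : Fin 5 → ℝ => y p * y p)
      (x p • ContinuousLinearMap.proj p + x p • ContinuousLinearMap.proj p) x :=
    fun p => (hp p).mul (hp p)
  have h := (((hsq 0).add (hsq 1)).const_mul ((1:ℝ)/2 * Is)).add
    ((((hsq 2).const_mul I₁).add (((hsq 3).const_mul I₂).add
      ((hsq 4).const_mul (I₃ + Is)))).const_mul ((1:ℝ)/2))
  have h' : HasFDerivAt (hingeE I₁ I₂ I₃ Is) _ x := h.congr_of_eventuallyEq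
    (Filter.Eventually.of_forall (fun y => by simp only [hingeE, Pi.add_apply]; ring))
  funext j
  simp only [grad]
  rw [h'.fderiv]
  fin_cases j <;>
    simp [Pi.single_apply, Matrix.cons_val_zero, Matrix.cons_val_one] <;> ring

end hingeAux

set_option maxHeartbeats 1600000 in
/-- The skew-symmetric matrix field `J` above satisfies the Jacobi identity
on all of ℝ⁵, and the hinge system is Hamiltonian with Hamiltonian `E` up to the constant
factor `I₃ + Is`: `J(x)·∇E(x) = (I₃+Is)·v(x)` for every `x`. -/
theorem hinge_poisson_structure
    (I₁ I₂ I₃ Is : ℝ) (hI₁ : 0 < I₁) (hI₂ : 0 < I₂) (hI₃ : 0 < I₃) (hIs : 0 < Is) :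
    JacobiIdentity (hingeJ I₁ I₂ I₃) ∧
    (∀ x : Fin 5 → ℝ,
      (hingeJ I₁ I₂ I₃ x).mulVec (grad (hingeE I₁ I₂ I₃ Is) x)
        = (I₃ + Is) • hinge I₁ I₂ I₃ Is x) := by
  constructor
  · intro i j k x
    fin_cases i <;> fin_cases j <;> fin_cases k <;>
      simp only [Fin.sum_univ_five, hingeJ, Matrix.of_apply, Matrix.cons_val', Matrix.cons_val_zero,
        Matrix.empty_val', Matrix.cons_val_fin_one, Matrix.cons_val_one, Matrix.head_cons,
        Matrix.head_fin_const, Matrix.cons_val_four, Matrix.cons_val_succ, Matrix.vecHead,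
        Matrix.vecTail, Function.comp] <;>
      simp [hinge_pdA, hinge_pdA', hinge_pdB, hinge_pdB', hinge_pdC, hinge_pdC', hinge_pdD,
        hinge_pdD', hinge_pdE, hinge_pdF, hinge_pd_const, Pi.single_apply]
  · intro x
    funext i
    rw [hinge_grad]
    fin_cases i <;>
      simp [Matrix.mulVec, dotProduct, Fin.sum_univ_five, hingeJ, hinge, Pi.smul_apply,
        smul_eq_mul] <;>
      (try field_simp) <;>
      (try ring)
end

section
/- (Flat inner body.) For the nonholonomic hinge system v on ℝ⁵ with the additional assumption I₃ = I₁ + I₂, the three functions C₁ = ω₁² + ω₂², C₂ = Ω₁² + (ω₂ − Ω₂)², C₃ = Ω₂² + (ω₁ − Ω₁)² are first integrals: ⟨v, ∇C_k⟩ = 0 on ℝ⁵ for k = 1, 2, 3. -/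
lemma hp (i : Fin 5) (x : Fin 5 → ℝ) :
    HasFDerivAt (fun y : Fin 5 → ℝ => y i)
      (ContinuousLinearMap.proj (R := ℝ) (φ := fun _ : Fin 5 => ℝ) i) x :=
  hasFDerivAt_apply i x

lemma hsq (i : Fin 5) (x : Fin 5 → ℝ) :
    HasFDerivAt (fun y : Fin 5 → ℝ => (y i) ^ 2)
      ((2 * x i) • ContinuousLinearMap.proj (R := ℝ) (φ := fun _ : Fin 5 => ℝ) i) x := by
  have h : (fun y : Fin 5 → ℝ => (y i) ^ 2) = fun y => y i * y i := by funext y; ring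
  rw [h]
  refine HasFDerivAt.congr_fderiv (show HasFDerivAt (fun y : Fin 5 → ℝ => y i * y i) _ x from (hp i x).mul (hp i x)) ?_
  ext v
  simp
  ring

lemma hsqsub (j k : Fin 5) (x : Fin 5 → ℝ) :
    HasFDerivAt (fun y : Fin 5 → ℝ => (y j - y k) ^ 2)
      ((2 * (x j - x k)) • (ContinuousLinearMap.proj (R := ℝ) (φ := fun _ : Fin 5 => ℝ) j
        - ContinuousLinearMap.proj (R := ℝ) (φ := fun _ : Fin 5 => ℝ) k)) x := by
  have h : (fun y : Fin 5 → ℝ => (y j - y k) ^ 2)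
      = fun y => (y j - y k) * (y j - y k) := by funext y; ring
  rw [h]
  refine HasFDerivAt.congr_fderiv (show HasFDerivAt (fun y : Fin 5 → ℝ => (y j - y k) * (y j - y k)) _ x from
    ((hp j x).sub (hp k x)).mul ((hp j x).sub (hp k x))) ?_
  ext v
  simp
  ring

/-- **flat inner body.** If `I₃ = I₁ + I₂`, the three functions
`C₁ = ω₁² + ω₂²`, `C₂ = Ω₁² + (ω₂−Ω₂)²`, `C₃ = Ω₂² + (ω₁−Ω₁)²` are first integrals
of the nonholonomic hinge system. -/
theorem hinge_flat_body_casimirs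
    (I₁ I₂ I₃ Is : ℝ) (hI₁ : 0 < I₁) (hI₂ : 0 < I₂) (hI₃ : 0 < I₃) (hIs : 0 < Is)
    (hflat : I₃ = I₁ + I₂) :
    (∀ x : Fin 5 → ℝ,
      fderiv ℝ (fun y : Fin 5 → ℝ => (y 2) ^ 2 + (y 3) ^ 2) x (hinge I₁ I₂ I₃ Is x) = 0) ∧
    (∀ x : Fin 5 → ℝ,
      fderiv ℝ (fun y : Fin 5 → ℝ => (y 0) ^ 2 + (y 3 - y 1) ^ 2) x (hinge I₁ I₂ I₃ Is x) = 0) ∧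
    (∀ x : Fin 5 → ℝ,
      fderiv ℝ (fun y : Fin 5 → ℝ => (y 1) ^ 2 + (y 2 - y 0) ^ 2) x (hinge I₁ I₂ I₃ Is x) = 0) := by
  subst hflat
  have hI₁' := hI₁.ne'
  have hI₂' := hI₂.ne'
  refine ⟨fun x => ?_, fun x => ?_, fun x => ?_⟩
  · rw [(show HasFDerivAt (fun y : Fin 5 → ℝ => (y 2) ^ 2 + (y 3) ^ 2) _ x from
      (hsq 2 x).add (hsq 3 x)).fderiv]
    simp [hinge]
    field_simp
    ring
  · rw [(show HasFDerivAt (fun y : Fin 5 → ℝ => (y 0) ^ 2 + (y 3 - y 1) ^ 2) _ x from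
      (hsq 0 x).add (hsqsub 3 1 x)).fderiv]
    simp [hinge]
    field_simp
    ring
  · rw [(show HasFDerivAt (fun y : Fin 5 → ℝ => (y 1) ^ 2 + (y 2 - y 0) ^ 2) _ x from
      (hsq 1 x).add (hsqsub 2 0 x)).fderiv]
    simp [hinge]
    field_simp
    ring
end

section
/- (General case Casimir functions.) For the nonholonomic hinge system v on ℝ⁵ (arbitrary positive I₁, I₂, I₃, I_s), the two functions C₁ = I₁(I₁−I₃)ω₁² + I₂(I₂−I₃)ω₂² and C₂ = (I₁ω₁ − I₃Ω₁)² + (I₂ω₂ − I₃Ω₂)² are first integrals: ⟨v, ∇C₁⟩ = 0 and ⟨v, ∇C₂⟩ = 0 on ℝ⁵. -/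
/-- **general case Casimir functions.** For arbitrary positive `I₁, I₂, I₃, Is`,
the two functions `C₁ = I₁(I₁−I₃)ω₁² + I₂(I₂−I₃)ω₂²` and
`C₂ = (I₁ω₁−I₃Ω₁)² + (I₂ω₂−I₃Ω₂)²` are first integrals of the nonholonomic hinge system. -/
theorem hinge_general_casimirs
    (I₁ I₂ I₃ Is : ℝ) (hI₁ : 0 < I₁) (hI₂ : 0 < I₂) (hI₃ : 0 < I₃) (hIs : 0 < Is) :
    (∀ x : Fin 5 → ℝ,
      fderiv ℝ (fun y : Fin 5 → ℝ => I₁ * (I₁ - I₃) * (y 2) ^ 2 + I₂ * (I₂ - I₃) * (y 3) ^ 2)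
        x (hinge I₁ I₂ I₃ Is x) = 0) ∧
    (∀ x : Fin 5 → ℝ,
      fderiv ℝ (fun y : Fin 5 → ℝ => (I₁ * y 2 - I₃ * y 0) ^ 2 + (I₂ * y 3 - I₃ * y 1) ^ 2)
        x (hinge I₁ I₂ I₃ Is x) = 0) := by
  have hp : ∀ (i : Fin 5) (x : Fin 5 → ℝ),
      HasFDerivAt (fun y : Fin 5 → ℝ => y i)
        (ContinuousLinearMap.proj (R := ℝ) (φ := fun _ : Fin 5 => ℝ) i) x :=
    fun i x => hasFDerivAt_apply i x
  have sq' : ∀ {f : (Fin 5 → ℝ) → ℝ} {L : (Fin 5 → ℝ) →L[ℝ] ℝ} {x : Fin 5 → ℝ},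
      HasFDerivAt f L x → HasFDerivAt (fun y => f y ^ 2) (f x • L + f x • L) x := by
    intro f L x h
    rw [show (fun y => f y ^ 2) = fun y => f y * f y from funext fun y => pow_two _]
    exact h.mul h
  constructor
  · intro x
    have h := (((sq' (hp 2 x)).const_mul (I₁ * (I₁ - I₃)))).add
      (((sq' (hp 3 x)).const_mul (I₂ * (I₂ - I₃))))
    rw [HasFDerivAt.fderiv (f := fun y : Fin 5 → ℝ => I₁ * (I₁ - I₃) * (y 2) ^ 2 + I₂ * (I₂ - I₃) * (y 3) ^ 2) h]
    simp only [hinge, ContinuousLinearMap.add_apply, ContinuousLinearMap.coe_smul',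
      Pi.smul_apply, ContinuousLinearMap.proj_apply, smul_eq_mul,
      Matrix.cons_val_zero, Matrix.cons_val_one, Matrix.head_cons, Matrix.cons_val_fin_one,
      Matrix.cons_val', Matrix.cons_val_succ, Matrix.cons_val]
    field_simp
    ring
  · intro x
    have h := ((sq' (((hp 2 x).const_mul I₁).sub ((hp 0 x).const_mul I₃)))).add
      ((sq' (((hp 3 x).const_mul I₂).sub ((hp 1 x).const_mul I₃))))
    rw [HasFDerivAt.fderiv (f := fun y : Fin 5 → ℝ => (I₁ * y 2 - I₃ * y 0) ^ 2 + (I₂ * y 3 - I₃ * y 1) ^ 2) h]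
    simp only [hinge, ContinuousLinearMap.add_apply, ContinuousLinearMap.coe_smul',
      ContinuousLinearMap.coe_sub', Pi.smul_apply, Pi.sub_apply,
      ContinuousLinearMap.proj_apply, smul_eq_mul,
      Matrix.cons_val_zero, Matrix.cons_val_one, Matrix.head_cons, Matrix.cons_val_fin_one,
      Matrix.cons_val', Matrix.cons_val_succ, Matrix.cons_val]
    field_simp
    ring
end
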